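/- arXiv:2509.14006 — 2 statements merged into one kernel-verified Lean document; each statement's English description precedes it below -/
import Mathlib

section
/- For every s ≥ 1, the number of 2s×2s ASMs with an s×s frozen square of zeroes in the top-left corner equals (A_s)^2, the square of the number of s×s ASMs. -/
open Finset

/-- An alternating sign matrix: entries in {0,1,-1}, and in each row and column
the nonzero entries alternate in sign and sum to 1 (equivalently, all partial
sums along each row and column are 0 or 1, and total sums are 1). -/
def IsASM {n : ℕ} (a : Matrix (Fin n) (Fin n) ℤ) : Prop :=
  (∀ i j, a i j = 0 ∨ a i j = 1 ∨ a i j = -1) ∧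
  (∀ i k, (∑ j ∈ Finset.Iic k, a i j) = 0 ∨ (∑ j ∈ Finset.Iic k, a i j) = 1) ∧
  (∀ i, (∑ j, a i j) = 1) ∧
  (∀ j k, (∑ i ∈ Finset.Iic k, a i j) = 0 ∨ (∑ i ∈ Finset.Iic k, a i j) = 1) ∧
  (∀ j, (∑ i, a i j) = 1)

/-- `A_n`: the number of `n × n` ASMs. -/
noncomputable def ASMCount (n : ℕ) : ℕ := Set.ncard {a : Matrix (Fin n) (Fin n) ℤ | IsASM a}

/-- `A_{n,r}` (0-based `r`): number of `n × n` ASMs whose unique 1 of the first row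
is in column `r`. -/
noncomputable def ASMRefined (n : ℕ) (r : Fin n) : ℕ :=
  Set.ncard {a : Matrix (Fin n) (Fin n) ℤ | IsASM a ∧ a ⟨0, r.pos⟩ r = 1}

/-- `B_{n,s}`: number of `n × n` ASMs with an `s × s` square of zeroes in the
top-left corner. -/
noncomputable def ASMFrozen (n s : ℕ) : ℕ :=
  Set.ncard {a : Matrix (Fin n) (Fin n) ℤ |
    IsASM a ∧ ∀ i j : Fin n, (i : ℕ) < s → (j : ℕ) < s → a i j = 0}

namespace ASMaux
variable {s : ℕ}

/-- Embedding of `Fin s` into the first half of `Fin (2*s)`. -/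
def lo (i : Fin s) : Fin (2*s) := ⟨i.val, by have := i.isLt; omega⟩
/-- Embedding of `Fin s` into the second half of `Fin (2*s)`. -/
def hi (i : Fin s) : Fin (2*s) := ⟨s + i.val, by have := i.isLt; omega⟩

@[simp] lemma lo_val (i : Fin s) : (lo i).val = i.val := rfl
@[simp] lemma hi_val (i : Fin s) : (hi i).val = s + i.val := rfl

lemma lo_inj : Function.Injective (lo (s := s)) := by
  intro a b h; apply Fin.ext; simpa [lo, Fin.ext_iff] using h

lemma hi_inj : Function.Injective (hi (s := s)) := by
  intro a b h; apply Fin.ext; have := congrArg Fin.val h; simp at this; omega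

lemma sum_split (f : Fin (2*s) → ℤ) :
    ∑ j, f j = (∑ j : Fin s, f (lo j)) + ∑ j : Fin s, f (hi j) := by
  have h1 : (univ : Finset (Fin (2*s))) =
      (univ.image lo) ∪ (univ.image hi) := by
    ext x
    simp only [mem_univ, mem_union, mem_image, true_iff, true_and]
    by_cases h : x.val < s
    · exact Or.inl ⟨⟨x.val, h⟩, by apply Fin.ext; simp⟩
    · exact Or.inr ⟨⟨x.val - s, by have := x.isLt; omega⟩,
        by apply Fin.ext; have := x.isLt; simp; omega⟩
  rw [h1, Finset.sum_union, Finset.sum_image (fun a _ b _ h => lo_inj h),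
      Finset.sum_image (fun a _ b _ h => hi_inj h)]
  · rw [Finset.disjoint_left]
    rintro x hx hy
    simp only [mem_image, mem_univ, true_and] at hx hy
    obtain ⟨a, rfl⟩ := hx
    obtain ⟨b, hb⟩ := hy
    have h2 : s + b.val = a.val := by simpa using congrArg Fin.val hb
    have := a.isLt; omega

lemma sum_Iic_lo (f : Fin (2*s) → ℤ) (k : Fin (2*s)) (hk : k.val < s) :
    ∑ j ∈ Iic k, f j = ∑ j ∈ Iic (⟨k.val, hk⟩ : Fin s), f (lo j) := by
  refine Finset.sum_nbij' (fun j => (⟨j.val % s, Nat.mod_lt _ (by omega)⟩ : Fin s)) lo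
    ?_ ?_ ?_ ?_ ?_
  · intro a ha
    simp only [mem_Iic, Fin.le_def] at ha ⊢
    have : a.val < s := by omega
    simp [Nat.mod_eq_of_lt this]; omega
  · intro a ha
    simp only [mem_Iic, Fin.le_def] at ha ⊢
    simpa using by omega
  · intro a ha
    simp only [mem_Iic, Fin.le_def] at ha
    apply Fin.ext; simp [Nat.mod_eq_of_lt (show a.val < s by omega)]
  · intro a _; apply Fin.ext; simp [Nat.mod_eq_of_lt a.isLt]
  · intro a ha
    simp only [mem_Iic, Fin.le_def] at ha
    congr 1; apply Fin.ext; simp [Nat.mod_eq_of_lt (show a.val < s by omega)]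

lemma sum_Iic_hi (f : Fin (2*s) → ℤ) (k : Fin (2*s)) (hk : s ≤ k.val) :
    ∑ j ∈ Iic k, f j = (∑ j : Fin s, f (lo j)) +
      ∑ j ∈ Iic (⟨k.val - s, by have := k.isLt; omega⟩ : Fin s), f (hi j) := by
  have hs0 : 0 < s := by omega
  rw [← Finset.sum_filter_add_sum_filter_not (Iic k) (fun j => j.val < s)]
  congr 1
  · refine Finset.sum_nbij' (fun j => (⟨j.val % s, Nat.mod_lt _ hs0⟩ : Fin s)) lo
      ?_ ?_ ?_ ?_ ?_
    · intro a _; simp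
    · intro a _
      simp only [mem_filter, mem_Iic, Fin.le_def]
      have := a.isLt; simp; omega
    · intro a ha
      simp only [mem_filter] at ha
      apply Fin.ext; simp [Nat.mod_eq_of_lt ha.2]
    · intro a _; apply Fin.ext; simp [Nat.mod_eq_of_lt a.isLt]
    · intro a ha
      simp only [mem_filter] at ha
      congr 1; apply Fin.ext; simp [Nat.mod_eq_of_lt ha.2]
  · refine Finset.sum_nbij' (fun j => (⟨j.val % s, Nat.mod_lt _ hs0⟩ : Fin s)) hi
      ?_ ?_ ?_ ?_ ?_
    · intro a ha
      simp only [mem_filter, mem_Iic, Fin.le_def, not_lt] at ha ⊢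
      have h2 : a.val % s = a.val - s := by
        have := a.isLt
        rw [Nat.mod_eq_sub_mod ha.2, Nat.mod_eq_of_lt (by omega)]
      simp [h2]; omega
    · intro a ha
      simp only [mem_Iic, Fin.le_def] at ha
      simp only [mem_filter, mem_Iic, Fin.le_def, not_lt]
      constructor
      · simp; omega
      · simp
    · intro a ha
      simp only [mem_filter, mem_Iic, Fin.le_def, not_lt] at ha
      have h2 : a.val % s = a.val - s := by
        have := a.isLt
        rw [Nat.mod_eq_sub_mod ha.2, Nat.mod_eq_of_lt (by omega)]
      apply Fin.ext; simp [h2]; omega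
    · intro a _
      apply Fin.ext
      simp [Nat.add_mod_left, Nat.mod_eq_of_lt a.isLt]
    · intro a ha
      simp only [mem_filter, mem_Iic, Fin.le_def, not_lt] at ha
      have h2 : a.val % s = a.val - s := by
        have := a.isLt
        rw [Nat.mod_eq_sub_mod ha.2, Nat.mod_eq_of_lt (by omega)]
      congr 1; apply Fin.ext; simp [h2]; omega

lemma sum_Iic_lo' (f : Fin (2*s) → ℤ) (k : Fin s) :
    ∑ j ∈ Iic (lo k), f j = ∑ j ∈ Iic k, f (lo j) := by
  rw [sum_Iic_lo f (lo k) (by simpa using k.isLt)]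
  refine Finset.sum_congr ?_ (fun x _ => rfl)
  ext x
  simp only [mem_Iic, Fin.le_def, lo_val, hi_val]

lemma sum_Iic_hi' (f : Fin (2*s) → ℤ) (k : Fin s) :
    ∑ j ∈ Iic (hi k), f j = (∑ j : Fin s, f (lo j)) + ∑ j ∈ Iic k, f (hi j) := by
  rw [sum_Iic_hi f (hi k) (by simp)]
  congr 1
  refine Finset.sum_congr ?_ (fun x _ => rfl)
  ext x
  simp only [mem_Iic, Fin.le_def, lo_val, hi_val]
  omega

lemma Iic_last (k : Fin s) (hk : s - 1 ≤ k.val) : Iic k = univ := by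
  ext x; simp only [mem_Iic, mem_univ, iff_true, Fin.le_def]
  have := x.isLt; omega

lemma eq_zero_of_partial {m : ℕ} (f : Fin m → ℤ) (h : ∀ k, ∑ x ∈ Iic k, f x = 0) :
    ∀ k, f k = 0 := by
  intro k
  have h1 := h k
  rw [← Finset.Iio_insert, Finset.sum_insert (by simp)] at h1
  rcases Nat.eq_zero_or_pos k.val with h0 | h0
  · have : Iio k = ∅ := by
      ext x; simp only [mem_Iio, Fin.lt_def, notMem_empty, iff_false, not_lt]; omega
    rw [this] at h1; simpa using h1
  · have : Iio k = Iic (⟨k.val - 1, by have := k.isLt; omega⟩ : Fin m) := by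
      ext x; simp only [mem_Iio, mem_Iic, Fin.lt_def, Fin.le_def]; omega
    rw [this, h ⟨k.val - 1, by have := k.isLt; omega⟩] at h1
    omega

lemma allone {m : ℕ} (f : Fin m → ℤ) (h01 : ∀ i, f i = 0 ∨ f i = 1)
    (hsum : ∑ i, f i = m) : ∀ i, f i = 1 := by
  have key : ∑ i, ((1 : ℤ) - f i) = 0 := by
    rw [Finset.sum_sub_distrib, hsum]
    simp [mul_comm]
  have h2 := (Finset.sum_eq_zero_iff_of_nonneg
    (fun i _ => by rcases h01 i with h | h <;> simp [h])).mp key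
  intro i
  have := h2 i (mem_univ i)
  omega

/-- The block matrix `[[0, B], [C, 0]]`. -/
def blockASM (B C : Matrix (Fin s) (Fin s) ℤ) :
    Matrix (Fin (2*s)) (Fin (2*s)) ℤ :=
  fun i j =>
    if h1 : i.val < s then
      if h2 : j.val < s then 0
      else B ⟨i.val, h1⟩ ⟨j.val - s, by have := j.isLt; omega⟩
    else
      if h2 : j.val < s then C ⟨i.val - s, by have := i.isLt; omega⟩ ⟨j.val, h2⟩
      else 0

@[simp] lemma block_lo_lo (B C : Matrix (Fin s) (Fin s) ℤ) (i j : Fin s) :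
    blockASM B C (lo i) (lo j) = 0 := by
  simp [blockASM, i.isLt, j.isLt]

@[simp] lemma block_lo_hi (B C : Matrix (Fin s) (Fin s) ℤ) (i j : Fin s) :
    blockASM B C (lo i) (hi j) = B i j := by
  have hj := j.isLt
  unfold blockASM
  rw [dif_pos (show (lo i).val < s from i.isLt), dif_neg (show ¬ (hi j).val < s by simp)]
  congr 1 <;> (apply Fin.ext; simp)

@[simp] lemma block_hi_lo (B C : Matrix (Fin s) (Fin s) ℤ) (i j : Fin s) :
    blockASM B C (hi i) (lo j) = C i j := by
  have hi' := i.isLt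
  unfold blockASM
  rw [dif_neg (show ¬ (hi i).val < s by simp), dif_pos (show (lo j).val < s from j.isLt)]
  congr 1 <;> (apply Fin.ext; simp)

@[simp] lemma block_hi_hi (B C : Matrix (Fin s) (Fin s) ℤ) (i j : Fin s) :
    blockASM B C (hi i) (hi j) = 0 := by
  have hi' := i.isLt; have hj := j.isLt
  unfold blockASM
  rw [dif_neg (show ¬ (hi i).val < s by simp), dif_neg (show ¬ (hi j).val < s by simp)]

lemma lo_or_hi (i : Fin (2*s)) :
    (∃ i' : Fin s, i = lo i') ∨ (∃ i' : Fin s, i = hi i') := by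
  have := i.isLt
  by_cases h : i.val < s
  · exact Or.inl ⟨⟨i.val, h⟩, Fin.ext rfl⟩
  · exact Or.inr ⟨⟨i.val - s, by omega⟩, Fin.ext (by simp; omega)⟩

lemma isASM_block {B C : Matrix (Fin s) (Fin s) ℤ} (hB : IsASM B) (hC : IsASM C) :
    IsASM (blockASM B C) := by
  obtain ⟨hB1, hB2, hB3, hB4, hB5⟩ := hB
  obtain ⟨hC1, hC2, hC3, hC4, hC5⟩ := hC
  refine ⟨?_, ?_, ?_, ?_, ?_⟩
  · intro i j
    rcases lo_or_hi i with ⟨i', rfl⟩ | ⟨i', rfl⟩ <;>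
      rcases lo_or_hi j with ⟨j', rfl⟩ | ⟨j', rfl⟩ <;> simp [hB1, hC1]
  · intro i k
    rcases lo_or_hi i with ⟨i', rfl⟩ | ⟨i', rfl⟩ <;> by_cases hk : k.val < s
    · rw [sum_Iic_lo _ k hk]; left; exact Finset.sum_eq_zero (by simp)
    · rw [sum_Iic_hi _ k (by omega)]
      simpa using hB2 i' _
    · rw [sum_Iic_lo _ k hk]
      simpa using hC2 i' _
    · rw [sum_Iic_hi _ k (by omega)]
      right; simp [hC3 i']
  · intro i
    rcases lo_or_hi i with ⟨i', rfl⟩ | ⟨i', rfl⟩ <;> rw [sum_split] <;>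
      simp [hB3, hC3]
  · intro j k
    rcases lo_or_hi j with ⟨j', rfl⟩ | ⟨j', rfl⟩ <;> by_cases hk : k.val < s
    · rw [sum_Iic_lo _ k hk]; left; exact Finset.sum_eq_zero (by simp)
    · rw [sum_Iic_hi _ k (by omega)]
      simpa using hC4 j' _
    · rw [sum_Iic_lo _ k hk]
      simpa using hB4 j' _
    · rw [sum_Iic_hi _ k (by omega)]
      right; simp [hB5 j']
  · intro j
    rcases lo_or_hi j with ⟨j', rfl⟩ | ⟨j', rfl⟩ <;> rw [sum_split] <;>
      simp [hB5, hC5]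

lemma block_frozen (B C : Matrix (Fin s) (Fin s) ℤ) :
    ∀ i j : Fin (2*s), (i : ℕ) < s → (j : ℕ) < s → blockASM B C i j = 0 := by
  intro i j hij hj
  have h1 : i = lo ⟨i.val, hij⟩ := Fin.ext rfl
  have h2 : j = lo ⟨j.val, hj⟩ := Fin.ext rfl
  rw [h1, h2, block_lo_lo]

section backward
variable {a : Matrix (Fin (2*s)) (Fin (2*s)) ℤ} (hs : 0 < s)
  (hA : IsASM a)
  (hfr : ∀ i j : Fin (2*s), (i : ℕ) < s → (j : ℕ) < s → a i j = 0)
include hs hA hfr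

lemma hB_col : ∀ j : Fin s, ∑ i : Fin s, a (lo i) (hi j) = 1 := by
  obtain ⟨hA1, hA2, hA3, hA4, hA5⟩ := hA
  apply allone
  · intro j
    have h := hA4 (hi j) (lo ⟨s - 1, by omega⟩)
    rwa [sum_Iic_lo', Iic_last _ (by simp)] at h
  · rw [Finset.sum_comm]
    have h1 : ∀ i : Fin s, ∑ j : Fin s, a (lo i) (hi j) = 1 := by
      intro i
      have h := hA3 (lo i)
      rw [sum_split] at h
      have z : ∑ j : Fin s, a (lo i) (lo j) = 0 :=
        Finset.sum_eq_zero fun j _ => hfr _ _ i.isLt j.isLt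
      omega
    rw [Finset.sum_congr rfl fun i _ => h1 i]
    simp [mul_comm]

lemma hC_row : ∀ i : Fin s, ∑ j : Fin s, a (hi i) (lo j) = 1 := by
  obtain ⟨hA1, hA2, hA3, hA4, hA5⟩ := hA
  apply allone
  · intro i
    have h := hA2 (hi i) (lo ⟨s - 1, by omega⟩)
    rwa [sum_Iic_lo', Iic_last _ (by simp)] at h
  · rw [Finset.sum_comm]
    have h1 : ∀ j : Fin s, ∑ i : Fin s, a (hi i) (lo j) = 1 := by
      intro j
      have h := hA5 (lo j)
      rw [sum_split] at h
      have z : ∑ i : Fin s, a (lo i) (lo j) = 0 :=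
        Finset.sum_eq_zero fun i _ => hfr _ _ i.isLt j.isLt
      omega
    rw [Finset.sum_congr rfl fun j _ => h1 j]
    simp [mul_comm]

lemma hD : ∀ i j : Fin s, a (hi i) (hi j) = 0 := by
  have hBc := hB_col hs hA hfr
  have hCr := hC_row hs hA hfr
  obtain ⟨hA1, hA2, hA3, hA4, hA5⟩ := hA
  have hcol0 : ∀ j' : Fin s, ∑ i : Fin s, a (hi i) (hi j') = 0 := by
    intro j'
    have h := hA5 (hi j')
    rw [sum_split] at h
    have := hBc j'
    omega
  have hP : ∀ i j : Fin s, ∑ j' ∈ Iic j, a (hi i) (hi j') = 0 := by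
    intro i j
    have hg : ∀ i : Fin s,
        (1 : ℤ) + ∑ j' ∈ Iic j, a (hi i) (hi j') = 0 ∨
        (1 : ℤ) + ∑ j' ∈ Iic j, a (hi i) (hi j') = 1 := by
      intro i
      have h := hA2 (hi i) (hi j)
      rwa [sum_Iic_hi', hCr i] at h
    have hsum : ∑ i : Fin s, (1 + ∑ j' ∈ Iic j, a (hi i) (hi j')) = s := by
      rw [Finset.sum_add_distrib, Finset.sum_comm]
      rw [Finset.sum_congr rfl fun j' _ => hcol0 j']
      simp [mul_comm]
    have hall := allone (fun i : Fin s => 1 + ∑ j' ∈ Iic j, a (hi i) (hi j')) hg hsum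
    have h2 : 1 + ∑ j' ∈ Iic j, a (hi i) (hi j') = 1 := hall i
    omega
  intro i j
  exact eq_zero_of_partial (fun j' => a (hi i) (hi j')) (hP i) j

lemma isASM_B : IsASM (fun i j => a (lo i) (hi j) : Matrix (Fin s) (Fin s) ℤ) := by
  have hBc := hB_col hs hA hfr
  obtain ⟨hA1, hA2, hA3, hA4, hA5⟩ := hA
  refine ⟨fun i j => hA1 _ _, ?_, ?_, ?_, hBc⟩
  · intro i k
    have h := hA2 (lo i) (hi k)
    rw [sum_Iic_hi'] at h
    have z : ∑ j : Fin s, a (lo i) (lo j) = 0 :=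
      Finset.sum_eq_zero fun j _ => hfr _ _ i.isLt j.isLt
    rw [z, zero_add] at h
    exact h
  · intro i
    have h := hA3 (lo i)
    rw [sum_split] at h
    have z : ∑ j : Fin s, a (lo i) (lo j) = 0 :=
      Finset.sum_eq_zero fun j _ => hfr _ _ i.isLt j.isLt
    rw [z, zero_add] at h
    exact h
  · intro j k
    have h := hA4 (hi j) (lo k)
    rwa [sum_Iic_lo'] at h

lemma isASM_C : IsASM (fun i j => a (hi i) (lo j) : Matrix (Fin s) (Fin s) ℤ) := by
  have hCr := hC_row hs hA hfr
  obtain ⟨hA1, hA2, hA3, hA4, hA5⟩ := hA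
  refine ⟨fun i j => hA1 _ _, ?_, hCr, ?_, ?_⟩
  · intro i k
    have h := hA2 (hi i) (lo k)
    rwa [sum_Iic_lo'] at h
  · intro j k
    have h := hA4 (lo j) (hi k)
    rw [sum_Iic_hi'] at h
    have z : ∑ i : Fin s, a (lo i) (lo j) = 0 :=
      Finset.sum_eq_zero fun i _ => hfr _ _ i.isLt j.isLt
    rw [z, zero_add] at h
    exact h
  · intro j
    have h := hA5 (lo j)
    rw [sum_split] at h
    have z : ∑ i : Fin s, a (lo i) (lo j) = 0 :=
      Finset.sum_eq_zero fun i _ => hfr _ _ i.isLt j.isLt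
    rw [z, zero_add] at h
    exact h

lemma a_eq_block :
    a = blockASM (fun i j => a (lo i) (hi j)) (fun i j => a (hi i) (lo j)) := by
  funext i j
  rcases lo_or_hi i with ⟨i', rfl⟩ | ⟨i', rfl⟩ <;>
    rcases lo_or_hi j with ⟨j', rfl⟩ | ⟨j', rfl⟩
  · exact (hfr _ _ i'.isLt j'.isLt).trans (block_lo_lo _ _ i' j').symm
  · exact (block_lo_hi (fun i j => a (lo i) (hi j)) (fun i j => a (hi i) (lo j)) i' j').symm
  · exact (block_hi_lo (fun i j => a (lo i) (hi j)) (fun i j => a (hi i) (lo j)) i' j').symm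
  · exact (hD hs hA hfr i' j').trans (block_hi_hi _ _ i' j').symm

end backward

end ASMaux

open ASMaux in
theorem asm_frozen_half (s : ℕ) (hs : 1 ≤ s) :
    ASMFrozen (2 * s) s = (ASMCount s) ^ 2 := by
  classical
  set T : Set (Matrix (Fin (2*s)) (Fin (2*s)) ℤ) :=
    {a | IsASM a ∧ ∀ i j : Fin (2*s), (i : ℕ) < s → (j : ℕ) < s → a i j = 0} with hT
  set P : Set (Matrix (Fin s) (Fin s) ℤ × Matrix (Fin s) (Fin s) ℤ) :=
    {B | IsASM B} ×ˢ {C | IsASM C} with hP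
  have hinj : Function.Injective
      (fun p : Matrix (Fin s) (Fin s) ℤ × Matrix (Fin s) (Fin s) ℤ => blockASM p.1 p.2) := by
    intro p q h
    have hB : p.1 = q.1 := by
      funext i j
      have := congrFun (congrFun h (lo i)) (hi j)
      simpa using this
    have hC : p.2 = q.2 := by
      funext i j
      have := congrFun (congrFun h (hi i)) (lo j)
      simpa using this
    exact Prod.ext hB hC
  have himg : (fun p : Matrix (Fin s) (Fin s) ℤ × Matrix (Fin s) (Fin s) ℤ =>
      blockASM p.1 p.2) '' P = T := by
    ext a
    constructor
    · rintro ⟨⟨B, C⟩, ⟨hB, hC⟩, rfl⟩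
      exact ⟨isASM_block hB hC, block_frozen B C⟩
    · rintro ⟨hA, hfr⟩
      refine ⟨⟨fun i j => a (lo i) (hi j), fun i j => a (hi i) (lo j)⟩,
        ⟨isASM_B (by omega) hA hfr, isASM_C (by omega) hA hfr⟩, ?_⟩
      exact (a_eq_block (by omega) hA hfr).symm
  have h1 : ASMFrozen (2*s) s = T.ncard := rfl
  rw [h1, ← himg, Set.ncard_image_of_injective _ hinj]
  have h2 : P.ncard = ASMCount s * ASMCount s := by
    rw [← Nat.card_coe_set_eq, hP]
    rw [Nat.card_congr (Equiv.Set.prod _ _), Nat.card_prod]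
    simp only [ASMCount]
    congr 1
  rw [h2, sq]
end

section
/- The map sending an n×n ASM a to the triangular array t, where t_{i,1} < t_{i,2} < ... < t_{i,i} are the positions j at which the partial column sums b_{ij} = ∑_{l=1}^{i} a_{lj} equal 1, is a bijection from n×n ASMs to monotone triangles of size n. -/
open Finset

/-- A monotone triangle of size `n`: rows strictly increasing, consecutive rows
weakly interlacing, bottom row `1,2,…,n`. Row `i` (0-based) has `i+1` entries. -/
def IsMonotoneTriangle {n : ℕ} (t : (i : Fin n) → Fin ((i : ℕ) + 1) → ℕ) : Prop :=
  (∀ (i : Fin n) (j k : Fin ((i : ℕ) + 1)), j < k → t i j < t i k) ∧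
  (∀ (i : Fin n) (h : (i : ℕ) + 1 < n) (j : Fin ((i : ℕ) + 1)),
    t ⟨(i : ℕ) + 1, h⟩ ⟨j.1, Nat.lt_succ_of_lt j.isLt⟩ ≤ t i j ∧
    t i j ≤ t ⟨(i : ℕ) + 1, h⟩ ⟨j.1 + 1, Nat.succ_lt_succ j.isLt⟩) ∧
  (∀ i : Fin n, (i : ℕ) = n - 1 → ∀ j, t i j = (j : ℕ) + 1)

/-- `t` is the triangular array associated to the ASM `a`: row `i` of `t` lists,
in increasing order, the (1-based) columns `c` where the partial column sum
`∑_{l ≤ i} a l c` equals 1. -/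
def AssocTriangle {n : ℕ} (a : Matrix (Fin n) (Fin n) ℤ)
    (t : (i : Fin n) → Fin ((i : ℕ) + 1) → ℕ) : Prop :=
  (∀ (i : Fin n) (j k : Fin ((i : ℕ) + 1)), j < k → t i j < t i k) ∧
  (∀ (i : Fin n) (c : Fin n),
    (∑ l ∈ Finset.Iic i, a l c) = 1 ↔ ∃ j, t i j = (c : ℕ) + 1)

lemma sum01_card {α : Type*} [DecidableEq α] (u : Finset α) (f : α → ℤ)
    (h : ∀ c ∈ u, f c = 0 ∨ f c = 1) :
    ∑ c ∈ u, f c = ((u.filter (fun c => f c = 1)).card : ℤ) := by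
  rw [← Finset.sum_filter_add_sum_filter_not u (fun c => f c = 1) f]
  have h1 : ∑ c ∈ u.filter (fun c => f c = 1), f c
      = ((u.filter (fun c => f c = 1)).card : ℤ) := by
    rw [Finset.sum_congr rfl (fun c hc => (Finset.mem_filter.mp hc).2)]
    simp
  have h2 : ∑ c ∈ u.filter (fun c => ¬ f c = 1), f c = 0 := by
    apply Finset.sum_eq_zero
    intro c hc
    rcases Finset.mem_filter.mp hc with ⟨hcu, hne⟩
    rcases h c hcu with h0 | h1
    · exact h0
    · exact absurd h1 hne
  rw [h1, h2, add_zero]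

lemma fin_Iic_zero {n : ℕ} (h : 0 < n) : Finset.Iic (⟨0, h⟩ : Fin n) = {⟨0, h⟩} := by
  ext l
  simp [Fin.le_def, Fin.ext_iff]

lemma fin_Iic_succ {n : ℕ} (i : ℕ) (h : i + 1 < n) :
    Finset.Iic (⟨i + 1, h⟩ : Fin n)
      = insert ⟨i + 1, h⟩ (Finset.Iic ⟨i, Nat.lt_of_succ_lt h⟩) := by
  ext l
  simp [Fin.le_def, Fin.ext_iff]
  omega

lemma fin_not_mem_Iic {n : ℕ} (i : ℕ) (h : i + 1 < n) :
    (⟨i + 1, h⟩ : Fin n) ∉ Finset.Iic (⟨i, Nat.lt_of_succ_lt h⟩ : Fin n) := by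
  simp [Fin.le_def]

lemma fin_Iic_univ {n : ℕ} (i : Fin n) (hi : (i : ℕ) = n - 1) :
    Finset.Iic i = Finset.univ := by
  ext l
  have := l.2
  simp only [Finset.mem_Iic, Finset.mem_univ, iff_true, Fin.le_def]
  omega

lemma mem_iff_exists_emb (s : Finset ℕ) {k : ℕ} (h : s.card = k) (x : ℕ) :
    x ∈ s ↔ ∃ j, s.orderEmbOfFin h j = x := by
  constructor
  · intro hx
    have := Finset.range_orderEmbOfFin s h
    have : x ∈ Set.range (s.orderEmbOfFin h) := by rw [this]; exact hx
    exact this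
  · rintro ⟨j, rfl⟩
    exact Finset.orderEmbOfFin_mem s h j

lemma count_le_emb (s : Finset ℕ) {k : ℕ} (h : s.card = k) (j : Fin k) :
    (s.filter (fun x => x ≤ s.orderEmbOfFin h j)).card = (j : ℕ) + 1 := by
  set e := s.orderEmbOfFin h with he
  have hinj : Function.Injective e := (s.orderEmbOfFin h).injective
  have himg : s.filter (fun x => x ≤ e j)
      = (Finset.univ.filter (fun j' : Fin k => j' ≤ j)).image e := by
    ext x
    simp only [Finset.mem_filter, Finset.mem_image, Finset.mem_univ, true_and]
    constructor
    · rintro ⟨hx, hle⟩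
      obtain ⟨j', rfl⟩ := (mem_iff_exists_emb s h x).mp hx
      exact ⟨j', (s.orderEmbOfFin h).le_iff_le.mp hle, rfl⟩
    · rintro ⟨j', hj', rfl⟩
      exact ⟨Finset.orderEmbOfFin_mem s h j', (s.orderEmbOfFin h).le_iff_le.mpr hj'⟩
  rw [himg, Finset.card_image_of_injective _ hinj]
  have : Finset.univ.filter (fun j' : Fin k => j' ≤ j) = Finset.Iic j := by
    ext x; simp
  rw [this, Fin.card_Iic]

lemma count_lt_emb (s : Finset ℕ) {k : ℕ} (h : s.card = k) (j : Fin k) :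
    (s.filter (fun x => x < s.orderEmbOfFin h j)).card = (j : ℕ) := by
  set e := s.orderEmbOfFin h with he
  have hinj : Function.Injective e := (s.orderEmbOfFin h).injective
  have himg : s.filter (fun x => x < e j)
      = (Finset.univ.filter (fun j' : Fin k => j' < j)).image e := by
    ext x
    simp only [Finset.mem_filter, Finset.mem_image, Finset.mem_univ, true_and]
    constructor
    · rintro ⟨hx, hle⟩
      obtain ⟨j', rfl⟩ := (mem_iff_exists_emb s h x).mp hx
      exact ⟨j', (s.orderEmbOfFin h).lt_iff_lt.mp hle, rfl⟩
    · rintro ⟨j', hj', rfl⟩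
      exact ⟨Finset.orderEmbOfFin_mem s h j', (s.orderEmbOfFin h).lt_iff_lt.mpr hj'⟩
  rw [himg, Finset.card_image_of_injective _ hinj]
  have : Finset.univ.filter (fun j' : Fin k => j' < j) = Finset.Iio j := by
    ext x; simp
  rw [this, Fin.card_Iio]

lemma emb_le_of_count (s : Finset ℕ) {k : ℕ} (h : s.card = k) (j : Fin k) (m : ℕ)
    (hc : (j : ℕ) + 1 ≤ (s.filter (fun x => x ≤ m)).card) :
    s.orderEmbOfFin h j ≤ m := by
  by_contra hlt
  push_neg at hlt
  have hsub : s.filter (fun x => x ≤ m) ⊆ s.filter (fun x => x < s.orderEmbOfFin h j) := by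
    intro x hx
    rcases Finset.mem_filter.mp hx with ⟨hxs, hxm⟩
    exact Finset.mem_filter.mpr ⟨hxs, lt_of_le_of_lt hxm hlt⟩
  have := Finset.card_le_card hsub
  rw [count_lt_emb s h j] at this
  omega

lemma interlace_of_counts (s u : Finset ℕ) {k : ℕ} (hs : s.card = k) (hu : u.card = k + 1)
    (H1 : ∀ m, (s.filter (fun x => x ≤ m)).card ≤ (u.filter (fun x => x ≤ m)).card)
    (H2 : ∀ m, (u.filter (fun x => x ≤ m)).card ≤ (s.filter (fun x => x ≤ m)).card + 1)
    (j : Fin k) :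
    u.orderEmbOfFin hu j.castSucc ≤ s.orderEmbOfFin hs j ∧
    s.orderEmbOfFin hs j ≤ u.orderEmbOfFin hu j.succ := by
  constructor
  · apply emb_le_of_count
    have h1 := H1 (s.orderEmbOfFin hs j)
    rw [count_le_emb s hs j] at h1
    simpa using h1
  · by_contra hlt
    push_neg at hlt
    have h2 := H2 (u.orderEmbOfFin hu j.succ)
    rw [count_le_emb u hu j.succ] at h2
    have hsub : s.filter (fun x => x ≤ u.orderEmbOfFin hu j.succ)
        ⊆ s.filter (fun x => x < s.orderEmbOfFin hs j) := by
      intro x hx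
      rcases Finset.mem_filter.mp hx with ⟨hxs, hxm⟩
      exact Finset.mem_filter.mpr ⟨hxs, lt_of_le_of_lt hxm hlt⟩
    have h3 := Finset.card_le_card hsub
    rw [count_lt_emb s hs j] at h3
    simp only [Fin.val_succ] at h2
    omega

def colSet {n : ℕ} (a : Matrix (Fin n) (Fin n) ℤ) (i : Fin n) : Finset ℕ :=
  (Finset.univ.filter (fun c : Fin n => ∑ l ∈ Finset.Iic i, a l c = 1)).image
    (fun c : Fin n => (c : ℕ) + 1)

lemma succ_inj_fin {n : ℕ} : Function.Injective (fun c : Fin n => (c : ℕ) + 1) := by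
  intro c d h
  simp only at h
  exact Fin.ext (by omega)

lemma colSet_card {n : ℕ} {a : Matrix (Fin n) (Fin n) ℤ} (ha : IsASM a) (i : Fin n) :
    (colSet a i).card = (i : ℕ) + 1 := by
  rw [colSet, Finset.card_image_of_injective _ succ_inj_fin]
  have hsum : ∑ c : Fin n, (∑ l ∈ Finset.Iic i, a l c)
      = ((Finset.univ.filter (fun c : Fin n => ∑ l ∈ Finset.Iic i, a l c = 1)).card : ℤ) :=
    sum01_card _ _ (fun c _ => ha.2.2.2.1 c i)
  have hsum2 : ∑ c : Fin n, (∑ l ∈ Finset.Iic i, a l c) = ((i : ℕ) : ℤ) + 1 := by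
    rw [Finset.sum_comm]
    have : ∀ l ∈ Finset.Iic i, ∑ c : Fin n, a l c = 1 := fun l _ => ha.2.2.1 l
    rw [Finset.sum_congr rfl this, Finset.sum_const, Fin.card_Iic]
    push_cast
    ring
  rw [hsum] at hsum2
  exact_mod_cast hsum2

lemma colSet_prefix {n : ℕ} (a : Matrix (Fin n) (Fin n) ℤ) (i : Fin n) (m : ℕ) :
    ((colSet a i).filter (fun x => x ≤ m)).card
      = (Finset.univ.filter (fun c : Fin n =>
          (∑ l ∈ Finset.Iic i, a l c = 1) ∧ (c : ℕ) + 1 ≤ m)).card := by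
  rw [colSet, Finset.filter_image, Finset.card_image_of_injective _ succ_inj_fin,
    Finset.filter_filter]

lemma row_prefix_a {n : ℕ} {a : Matrix (Fin n) (Fin n) ℤ} (ha : IsASM a)
    (i : Fin n) (m : ℕ) :
    (∑ c ∈ Finset.univ.filter (fun c : Fin n => (c : ℕ) + 1 ≤ m), a i c) = 0 ∨
    (∑ c ∈ Finset.univ.filter (fun c : Fin n => (c : ℕ) + 1 ≤ m), a i c) = 1 := by
  rcases Nat.eq_zero_or_pos m with rfl | hm
  · left
    rw [Finset.filter_false_of_mem (by intro c _; omega), Finset.sum_empty]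
  · have hn : 0 < n := i.pos
    set k : Fin n := ⟨min (m - 1) (n - 1), by omega⟩ with hk
    have : Finset.univ.filter (fun c : Fin n => (c : ℕ) + 1 ≤ m) = Finset.Iic k := by
      ext c
      have := c.2
      simp only [Finset.mem_filter, Finset.mem_univ, true_and, Finset.mem_Iic,
        Fin.le_def, hk]
      omega
    rw [this]
    exact ha.2.1 i k

lemma prefix_sum_card {n : ℕ} {a : Matrix (Fin n) (Fin n) ℤ} (ha : IsASM a)
    (i : Fin n) (m : ℕ) :
    ∑ c ∈ Finset.univ.filter (fun c : Fin n => (c : ℕ) + 1 ≤ m),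
        (∑ l ∈ Finset.Iic i, a l c)
      = (((colSet a i).filter (fun x => x ≤ m)).card : ℤ) := by
  rw [sum01_card _ _ (fun c _ => ha.2.2.2.1 c i), colSet_prefix, Finset.filter_filter]
  congr 2
  ext c
  simp only [Finset.mem_filter]
  tauto

lemma count_step {n : ℕ} {a : Matrix (Fin n) (Fin n) ℤ} (ha : IsASM a)
    (i : ℕ) (h : i + 1 < n) (m : ℕ) :
    ((colSet a ⟨i, Nat.lt_of_succ_lt h⟩).filter (fun x => x ≤ m)).card
        ≤ ((colSet a ⟨i + 1, h⟩).filter (fun x => x ≤ m)).card ∧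
    ((colSet a ⟨i + 1, h⟩).filter (fun x => x ≤ m)).card
        ≤ ((colSet a ⟨i, Nat.lt_of_succ_lt h⟩).filter (fun x => x ≤ m)).card + 1 := by
  set i0 : Fin n := ⟨i, Nat.lt_of_succ_lt h⟩
  set i1 : Fin n := ⟨i + 1, h⟩
  set A := Finset.univ.filter (fun c : Fin n => (c : ℕ) + 1 ≤ m) with hA
  have hstep : ∀ c : Fin n,
      a i1 c = (∑ l ∈ Finset.Iic i1, a l c) - (∑ l ∈ Finset.Iic i0, a l c) := by
    intro c
    rw [fin_Iic_succ i h, Finset.sum_insert (fin_not_mem_Iic i h)]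
    ring
  have hsum : ∑ c ∈ A, a i1 c
      = (((colSet a i1).filter (fun x => x ≤ m)).card : ℤ)
        - (((colSet a i0).filter (fun x => x ≤ m)).card : ℤ) := by
    rw [Finset.sum_congr rfl (fun c _ => hstep c), Finset.sum_sub_distrib,
      prefix_sum_card ha i1 m, prefix_sum_card ha i0 m]
  rcases row_prefix_a ha i1 m with h0 | h1
  · rw [h0] at hsum
    constructor <;> omega
  · rw [h1] at hsum
    constructor <;> omega

lemma mem_colSet_iff {n : ℕ} (a : Matrix (Fin n) (Fin n) ℤ) (i : Fin n) (c : Fin n) :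
    ((c : ℕ) + 1 ∈ colSet a i) ↔ (∑ l ∈ Finset.Iic i, a l c) = 1 := by
  constructor
  · intro hc
    rw [colSet, Finset.mem_image] at hc
    obtain ⟨c', hc', hcc⟩ := hc
    have : c' = c := succ_inj_fin hcc
    subst this
    exact (Finset.mem_filter.mp hc').2
  · intro hc
    rw [colSet, Finset.mem_image]
    exact ⟨c, Finset.mem_filter.mpr ⟨Finset.mem_univ c, hc⟩, rfl⟩

lemma assoc_exists {n : ℕ} {a : Matrix (Fin n) (Fin n) ℤ} (ha : IsASM a) :
    AssocTriangle a (fun i j => (colSet a i).orderEmbOfFin (colSet_card ha i) j) := by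
  constructor
  · intro i j k hjk
    exact ((colSet a i).orderEmbOfFin (colSet_card ha i)).strictMono hjk
  · intro i c
    rw [← mem_colSet_iff a i c]
    exact mem_iff_exists_emb (colSet a i) (colSet_card ha i) _

lemma assoc_eq_emb {n : ℕ} {a : Matrix (Fin n) (Fin n) ℤ} (ha : IsASM a)
    {t : (i : Fin n) → Fin ((i : ℕ) + 1) → ℕ} (h : AssocTriangle a t) (i : Fin n) :
    t i = fun j => (colSet a i).orderEmbOfFin (colSet_card ha i) j := by
  have hmono : StrictMono (t i) := fun j k hjk => h.1 i j k hjk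
  have hsub : colSet a i ⊆ Finset.univ.image (t i) := by
    intro x hx
    rw [colSet, Finset.mem_image] at hx
    obtain ⟨c, hc, rfl⟩ := hx
    obtain ⟨j, hj⟩ := (h.2 i c).mp (Finset.mem_filter.mp hc).2
    exact Finset.mem_image.mpr ⟨j, Finset.mem_univ j, hj⟩
  have hcard : (Finset.univ.image (t i)).card = (colSet a i).card := by
    rw [Finset.card_image_of_injective _ hmono.injective, colSet_card ha i,
      Finset.card_univ, Fintype.card_fin]
  have heq : Finset.univ.image (t i) = colSet a i :=
    (Finset.eq_of_subset_of_card_le hsub (le_of_eq hcard)).symm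
  have hval : ∀ j, t i j ∈ colSet a i := by
    intro j
    rw [← heq]
    exact Finset.mem_image.mpr ⟨j, Finset.mem_univ j, rfl⟩
  have := Finset.orderEmbOfFin_unique (colSet_card ha i) hval hmono
  exact this

lemma assoc_unique {n : ℕ} {a : Matrix (Fin n) (Fin n) ℤ} (ha : IsASM a) :
    ∃! t : (i : Fin n) → Fin ((i : ℕ) + 1) → ℕ, AssocTriangle a t := by
  refine ⟨fun i j => (colSet a i).orderEmbOfFin (colSet_card ha i) j,
    assoc_exists ha, ?_⟩
  intro t ht
  funext i
  exact assoc_eq_emb ha ht i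

lemma assoc_monotone {n : ℕ} {a : Matrix (Fin n) (Fin n) ℤ} (ha : IsASM a)
    {t : (i : Fin n) → Fin ((i : ℕ) + 1) → ℕ} (h : AssocTriangle a t) :
    IsMonotoneTriangle t := by
  refine ⟨h.1, ?_, ?_⟩
  · rintro ⟨iv, hiv⟩ hlt j
    have h0 := assoc_eq_emb ha h ⟨iv, hiv⟩
    have h1 := assoc_eq_emb ha h ⟨iv + 1, hlt⟩
    have hs : (colSet a (⟨iv, hiv⟩ : Fin n)).card = iv + 1 := colSet_card ha _
    have hu : (colSet a (⟨iv + 1, hlt⟩ : Fin n)).card = iv + 1 + 1 := colSet_card ha _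
    have key := interlace_of_counts (colSet a ⟨iv, hiv⟩) (colSet a ⟨iv + 1, hlt⟩) hs hu
      (fun m => (count_step ha iv hlt m).1) (fun m => (count_step ha iv hlt m).2) j
    constructor
    · rw [h0, h1]; exact key.1
    · rw [h0, h1]; exact key.2
  · intro i hi j
    have h0 := assoc_eq_emb ha h i
    have hcol : colSet a i = Finset.univ.image (fun c : Fin n => (c : ℕ) + 1) := by
      rw [colSet]
      congr 1
      rw [Finset.filter_true_of_mem]
      intro c _
      rw [fin_Iic_univ i hi]
      exact ha.2.2.2.2 c
    have hmem : ∀ j' : Fin ((i : ℕ) + 1), (fun j' : Fin ((i : ℕ) + 1) => (j' : ℕ) + 1) j' ∈ colSet a i := by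
      intro j'
      rw [hcol, Finset.mem_image]
      have hj' : (j' : ℕ) < n := by have := j'.2; omega
      exact ⟨⟨j', hj'⟩, Finset.mem_univ _, rfl⟩
    have hmono : StrictMono (fun j' : Fin ((i : ℕ) + 1) => (j' : ℕ) + 1) := by
      intro x y hxy
      simp only
      have : (x : ℕ) < y := hxy
      omega
    have huniq := Finset.orderEmbOfFin_unique (colSet_card ha i) hmem hmono
    rw [h0, ← huniq]

lemma tri_bound_aux {n : ℕ} {t : (i : Fin n) → Fin ((i : ℕ) + 1) → ℕ}
    (ht : IsMonotoneTriangle t) :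
    ∀ (d : ℕ) (i : Fin n), n - 1 - (i : ℕ) = d → ∀ j : Fin ((i : ℕ) + 1),
      (j : ℕ) + 1 ≤ t i j ∧ t i j ≤ (j : ℕ) + 1 + d := by
  intro d
  induction d with
  | zero =>
    intro i hi j
    have hi' : (i : ℕ) = n - 1 := by have := i.2; omega
    rw [ht.2.2 i hi' j]
    omega
  | succ d ih =>
    intro i hi j
    have h1 : (i : ℕ) + 1 < n := by have := i.2; omega
    have hd : n - 1 - ((⟨(i : ℕ) + 1, h1⟩ : Fin n) : ℕ) = d := by
      simp only [Fin.val_mk]; omega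
    have hlow := (ih ⟨(i : ℕ) + 1, h1⟩ hd ⟨j.1, Nat.lt_succ_of_lt j.isLt⟩).1
    have hhigh := (ih ⟨(i : ℕ) + 1, h1⟩ hd ⟨j.1 + 1, Nat.succ_lt_succ j.isLt⟩).2
    have hint := ht.2.1 i h1 j
    constructor
    · have : (j : ℕ) + 1 ≤ t ⟨(i : ℕ) + 1, h1⟩ ⟨j.1, Nat.lt_succ_of_lt j.isLt⟩ := by
        simpa using hlow
      exact le_trans this hint.1
    · have : t ⟨(i : ℕ) + 1, h1⟩ ⟨j.1 + 1, Nat.succ_lt_succ j.isLt⟩ ≤ (j : ℕ) + 1 + (d + 1) := by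
        simp only [Fin.val_mk] at hhigh; omega
      exact le_trans hint.2 this

lemma tri_bound {n : ℕ} {t : (i : Fin n) → Fin ((i : ℕ) + 1) → ℕ}
    (ht : IsMonotoneTriangle t) (i : Fin n) (j : Fin ((i : ℕ) + 1)) :
    1 ≤ t i j ∧ t i j ≤ n := by
  have h := tri_bound_aux ht (n - 1 - (i : ℕ)) i rfl j
  have hi := i.2
  have hj := j.2
  omega

def bbF {n : ℕ} (t : (i : Fin n) → Fin ((i : ℕ) + 1) → ℕ) (i : ℕ) (c : Fin n) : ℤ :=
  if h : i < n then
    (if (c : ℕ) + 1 ∈ Finset.univ.image (t ⟨i, h⟩) then 1 else 0)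
  else 0

def aF {n : ℕ} (t : (i : Fin n) → Fin ((i : ℕ) + 1) → ℕ) : Matrix (Fin n) (Fin n) ℤ :=
  fun i c => bbF t (i : ℕ) c - (if (i : ℕ) = 0 then 0 else bbF t ((i : ℕ) - 1) c)

lemma bbF01 {n : ℕ} (t : (i : Fin n) → Fin ((i : ℕ) + 1) → ℕ) (i : ℕ) (c : Fin n) :
    bbF t i c = 0 ∨ bbF t i c = 1 := by
  rw [bbF]; split_ifs <;> simp

lemma aF_partial_col {n : ℕ} (t : (i : Fin n) → Fin ((i : ℕ) + 1) → ℕ) :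
    ∀ (i0 : ℕ) (h : i0 < n) (c : Fin n),
      ∑ l ∈ Finset.Iic (⟨i0, h⟩ : Fin n), aF t l c = bbF t i0 c := by
  intro i0
  induction i0 with
  | zero =>
    intro h c
    rw [fin_Iic_zero h, Finset.sum_singleton]
    simp [aF]
  | succ i0 ih =>
    intro h c
    rw [fin_Iic_succ i0 h, Finset.sum_insert (fin_not_mem_Iic i0 h),
      ih (Nat.lt_of_succ_lt h) c]
    simp only [aF, Fin.val_mk]
    have : ¬ (i0 + 1 = 0) := by omega
    rw [if_neg this]
    simp only [Nat.add_sub_cancel]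
    ring

lemma tri_inj {n : ℕ} {t : (i : Fin n) → Fin ((i : ℕ) + 1) → ℕ}
    (ht : IsMonotoneTriangle t) (i : Fin n) : Function.Injective (t i) := by
  have hm : StrictMono (t i) := fun j k hjk => ht.1 i j k hjk
  exact hm.injective

/-- count of columns `c` with `c+1 ≤ m` and `c+1` in row `i0` of the triangle,
equals count of triangle entries `≤ m` in row `i0`. -/

lemma count_transfer {n : ℕ} {t : (i : Fin n) → Fin ((i : ℕ) + 1) → ℕ}
    (ht : IsMonotoneTriangle t) (i0 : ℕ) (hi : i0 < n) (m : ℕ) :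
    (Finset.univ.filter (fun c : Fin n =>
        (c : ℕ) + 1 ≤ m ∧ (c : ℕ) + 1 ∈ Finset.univ.image (t ⟨i0, hi⟩))).card
      = (Finset.univ.filter (fun j : Fin (i0 + 1) => t ⟨i0, hi⟩ j ≤ m)).card := by
  symm
  apply Finset.card_bij (fun (j : Fin (i0 + 1)) (hj : j ∈ Finset.univ.filter
      (fun j : Fin (i0 + 1) => t ⟨i0, hi⟩ j ≤ m)) =>
    (⟨t ⟨i0, hi⟩ j - 1, by
      have hb := tri_bound ht ⟨i0, hi⟩ j
      omega⟩ : Fin n))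
  · intro j hj
    rw [Finset.mem_filter] at hj ⊢
    have hb := tri_bound ht ⟨i0, hi⟩ j
    refine ⟨Finset.mem_univ _, by simp only [Fin.val_mk]; omega, ?_⟩
    simp only [Fin.val_mk]
    rw [Finset.mem_image]
    exact ⟨j, Finset.mem_univ _, by omega⟩
  · intro j hj k hk he
    have hb := tri_bound ht ⟨i0, hi⟩ j
    have hb' := tri_bound ht ⟨i0, hi⟩ k
    apply tri_inj ht ⟨i0, hi⟩
    have := Fin.mk.injEq .. ▸ he
    simp only [Fin.mk.injEq] at he
    omega
  · intro c hc
    rw [Finset.mem_filter] at hc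
    obtain ⟨-, hcm, hcmem⟩ := hc
    rw [Finset.mem_image] at hcmem
    obtain ⟨j, -, hj⟩ := hcmem
    refine ⟨j, Finset.mem_filter.mpr ⟨Finset.mem_univ _, by omega⟩, ?_⟩
    apply Fin.ext
    simp only [Fin.val_mk]
    omega

/-- prefix-count monotonicity between consecutive rows of a monotone triangle -/

lemma p_step {n : ℕ} {t : (i : Fin n) → Fin ((i : ℕ) + 1) → ℕ}
    (ht : IsMonotoneTriangle t) (i0 : ℕ) (h : i0 + 1 < n) (m : ℕ) :
    (Finset.univ.filter (fun j : Fin (i0 + 1) =>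
        t ⟨i0, Nat.lt_of_succ_lt h⟩ j ≤ m)).card
      ≤ (Finset.univ.filter (fun j : Fin (i0 + 1 + 1) => t ⟨i0 + 1, h⟩ j ≤ m)).card ∧
    (Finset.univ.filter (fun j : Fin (i0 + 1 + 1) => t ⟨i0 + 1, h⟩ j ≤ m)).card
      ≤ (Finset.univ.filter (fun j : Fin (i0 + 1) =>
          t ⟨i0, Nat.lt_of_succ_lt h⟩ j ≤ m)).card + 1 := by
  set s := Finset.univ.filter (fun j : Fin (i0 + 1) => t ⟨i0, Nat.lt_of_succ_lt h⟩ j ≤ m)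
    with hs
  set u := Finset.univ.filter (fun j : Fin (i0 + 1 + 1) => t ⟨i0 + 1, h⟩ j ≤ m) with hu
  constructor
  · apply Finset.card_le_card_of_injOn
      (fun j : Fin (i0 + 1) => (⟨j.1, Nat.lt_succ_of_lt j.isLt⟩ : Fin (i0 + 2)))
    · intro j hj
      rw [hs, Finset.mem_coe, Finset.mem_filter] at hj
      rw [hu, Finset.mem_coe, Finset.mem_filter]
      have hint := (ht.2.1 ⟨i0, Nat.lt_of_succ_lt h⟩ h j).1
      exact ⟨Finset.mem_univ _, le_trans hint hj.2⟩
    · intro j _ k _ he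
      simp only [Fin.mk.injEq] at he
      exact Fin.ext he
  · have hsub : u ⊆ insert (0 : Fin (i0 + 2)) (u.erase 0) := by
      intro x hx
      by_cases hx0 : x = 0
      · rw [hx0]; exact Finset.mem_insert_self _ _
      · exact Finset.mem_insert_of_mem (Finset.mem_erase.mpr ⟨hx0, hx⟩)
    have h1 : u.card ≤ (u.erase 0).card + 1 :=
      le_trans (Finset.card_le_card hsub) (Finset.card_insert_le _ _)
    have h2 : (u.erase 0).card ≤ s.card := by
      apply Finset.card_le_card_of_injOn
        (fun j : Fin (i0 + 1 + 1) => (⟨j.1 - 1, by have := j.2; omega⟩ : Fin (i0 + 1)))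
      · intro j hj
        have hj' : j ∈ u.erase 0 := hj
        rw [Finset.mem_erase, hu, Finset.mem_filter] at hj'
        obtain ⟨hj0, -, hjm⟩ := hj'
        have hj0' : (j : ℕ) ≠ 0 := fun hc => hj0 (Fin.ext hc)
        rw [hs, Finset.mem_coe, Finset.mem_filter]
        refine ⟨Finset.mem_univ _, ?_⟩
        have hint := (ht.2.1 ⟨i0, Nat.lt_of_succ_lt h⟩ h
          ⟨j.1 - 1, by simp only [Fin.val_mk]; have := j.2; omega⟩).2
        have hje : (⟨(j.1 - 1) + 1, by have := j.2; have := hj0'; omega⟩ : Fin (i0 + 2)) = j :=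
          Fin.ext (by simp only [Fin.val_mk]; have := hj0'; omega)
        simp only [Fin.val_mk] at hint
        rw [hje] at hint
        exact le_trans hint hjm
      · intro j hj k hk he
        have hj' : j ∈ u.erase 0 := hj
        have hk' : k ∈ u.erase 0 := hk
        rw [Finset.mem_erase] at hj' hk'
        have hj0 : (j : ℕ) ≠ 0 := fun hc => hj'.1 (Fin.ext hc)
        have hk0 : (k : ℕ) ≠ 0 := fun hc => hk'.1 (Fin.ext hc)
        simp only [Fin.mk.injEq] at he
        exact Fin.ext (by omega)
    omega

lemma bbF_eq_one_iff {n : ℕ} (t : (i : Fin n) → Fin ((i : ℕ) + 1) → ℕ)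
    {i0 : ℕ} (hi : i0 < n) (c : Fin n) :
    bbF t i0 c = 1 ↔ (c : ℕ) + 1 ∈ Finset.univ.image (t ⟨i0, hi⟩) := by
  rw [bbF, dif_pos hi]
  split_ifs with h
  · simp [h]
  · simp [h]

/-- partial sums of bbF over a prefix of columns, as a triangle-row count -/

lemma bbF_prefix_sum {n : ℕ} {t : (i : Fin n) → Fin ((i : ℕ) + 1) → ℕ}
    (ht : IsMonotoneTriangle t) {i0 : ℕ} (hi : i0 < n) (m : ℕ) :
    ∑ c ∈ Finset.univ.filter (fun c : Fin n => (c : ℕ) + 1 ≤ m), bbF t i0 c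
      = ((Finset.univ.filter (fun j : Fin (i0 + 1) => t ⟨i0, hi⟩ j ≤ m)).card : ℤ) := by
  rw [sum01_card _ _ (fun c _ => bbF01 t i0 c), ← count_transfer ht i0 hi m]
  congr 1
  rw [Finset.filter_filter]
  congr 1
  apply Finset.filter_congr
  intro c _
  rw [bbF_eq_one_iff t hi c]

lemma bbF_total_sum {n : ℕ} {t : (i : Fin n) → Fin ((i : ℕ) + 1) → ℕ}
    (ht : IsMonotoneTriangle t) {i0 : ℕ} (hi : i0 < n) :
    ∑ c : Fin n, bbF t i0 c = (i0 : ℤ) + 1 := by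
  have h1 : (Finset.univ.filter (fun c : Fin n => (c : ℕ) + 1 ≤ n)) = Finset.univ := by
    apply Finset.filter_true_of_mem
    intro c _
    have := c.2
    omega
  have h2 : (Finset.univ.filter (fun j : Fin (i0 + 1) => t ⟨i0, hi⟩ j ≤ n)) = Finset.univ := by
    apply Finset.filter_true_of_mem
    intro j _
    exact (tri_bound ht ⟨i0, hi⟩ j).2
  have := bbF_prefix_sum ht hi n
  rw [h1, h2, Finset.card_univ, Fintype.card_fin] at this
  rw [this]
  push_cast
  ring

lemma aF_isASM {n : ℕ} {t : (i : Fin n) → Fin ((i : ℕ) + 1) → ℕ}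
    (ht : IsMonotoneTriangle t) : IsASM (aF t) := by
  have hpc : ∀ (i : Fin n) (c : Fin n),
      ∑ l ∈ Finset.Iic i, aF t l c = bbF t (i : ℕ) c := by
    intro i c
    have := aF_partial_col t (i : ℕ) i.2 c
    rwa [Fin.eta] at this
  refine ⟨?_, ?_, ?_, ?_, ?_⟩
  · -- entries
    intro i c
    by_cases h0 : (i : ℕ) = 0
    · simp only [aF, if_pos h0]
      rcases bbF01 t (i : ℕ) c with h1 | h1 <;> omega
    · simp only [aF, if_neg h0]
      rcases bbF01 t (i : ℕ) c with h1 | h1 <;>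
        rcases bbF01 t ((i : ℕ) - 1) c with h2 | h2 <;> omega
  · -- row partial sums
    intro i k
    have hsplit :
        (Finset.Iic k) = Finset.univ.filter (fun c : Fin n => (c : ℕ) + 1 ≤ (k : ℕ) + 1) := by
      ext c
      simp only [Finset.mem_Iic, Finset.mem_filter, Finset.mem_univ, true_and, Fin.le_def]
      omega
    rw [hsplit]
    rcases i with ⟨i0, hi0⟩
    match i0 with
    | 0 =>
      have : ∀ c ∈ Finset.univ.filter (fun c : Fin n => (c : ℕ) + 1 ≤ (k : ℕ) + 1),
          aF t ⟨0, hi0⟩ c = bbF t 0 c := by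
        intro c _
        simp [aF]
      rw [Finset.sum_congr rfl this, bbF_prefix_sum ht hi0 ((k : ℕ) + 1)]
      have hcard : (Finset.univ.filter (fun j : Fin (0 + 1) =>
          t ⟨0, hi0⟩ j ≤ (k : ℕ) + 1)).card ≤ 1 := by
        calc _ ≤ (Finset.univ : Finset (Fin (0 + 1))).card := Finset.card_le_card
                (Finset.filter_subset _ _)
          _ = 1 := by simp
      omega
    | i0 + 1 =>
      have hstep : ∀ c ∈ Finset.univ.filter (fun c : Fin n => (c : ℕ) + 1 ≤ (k : ℕ) + 1),
          aF t ⟨i0 + 1, hi0⟩ c = bbF t (i0 + 1) c - bbF t i0 c := by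
        intro c _
        simp only [aF, Fin.val_mk]
        rw [if_neg (by omega)]
        norm_num
      rw [Finset.sum_congr rfl hstep, Finset.sum_sub_distrib,
        bbF_prefix_sum ht hi0 ((k : ℕ) + 1),
        bbF_prefix_sum ht (Nat.lt_of_succ_lt hi0) ((k : ℕ) + 1)]
      have hp := p_step ht i0 hi0 ((k : ℕ) + 1)
      set x := (Finset.univ.filter (fun j : Fin (i0 + 1 + 1) => t ⟨i0 + 1, hi0⟩ j ≤ (k : ℕ) + 1)).card with hx
      set y := (Finset.univ.filter (fun j : Fin (i0 + 1) => t ⟨i0, Nat.lt_of_succ_lt hi0⟩ j ≤ (k : ℕ) + 1)).card with hy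
      omega
  · -- row total sums
    intro i
    have huniv : (Finset.univ : Finset (Fin n))
        = Finset.univ.filter (fun c : Fin n => (c : ℕ) + 1 ≤ n) := by
      symm
      apply Finset.filter_true_of_mem
      intro c _
      have := c.2
      omega
    rcases i with ⟨i0, hi0⟩
    match i0 with
    | 0 =>
      have : ∀ c : Fin n, aF t ⟨0, hi0⟩ c = bbF t 0 c := by intro c; simp [aF]
      rw [Finset.sum_congr rfl (fun c _ => this c), bbF_total_sum ht hi0]
      norm_num
    | i0 + 1 =>
      have hstep : ∀ c : Fin n,
          aF t ⟨i0 + 1, hi0⟩ c = bbF t (i0 + 1) c - bbF t i0 c := by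
        intro c
        simp only [aF, Fin.val_mk]
        rw [if_neg (by omega)]
        norm_num
      rw [Finset.sum_congr rfl (fun c _ => hstep c), Finset.sum_sub_distrib,
        bbF_total_sum ht hi0, bbF_total_sum ht (Nat.lt_of_succ_lt hi0)]
      push_cast
      ring
  · -- column partial sums
    intro c k
    rw [hpc k c]
    exact bbF01 t (k : ℕ) c
  · -- column total sums
    intro c
    have hn : 0 < n := c.pos
    have hlast : (Finset.univ : Finset (Fin n)) = Finset.Iic ⟨n - 1, by omega⟩ := by
      symm
      exact fin_Iic_univ _ (by simp)
    rw [hlast, aF_partial_col t (n - 1) (by omega) c]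
    rw [bbF_eq_one_iff t (show n - 1 < n by omega) c]
    rw [Finset.mem_image]
    have hc : (c : ℕ) < (n - 1) + 1 := by have := c.2; omega
    refine ⟨⟨(c : ℕ), by simpa using hc⟩, Finset.mem_univ _, ?_⟩
    have := ht.2.2 ⟨n - 1, by omega⟩ (by simp) ⟨(c : ℕ), by simpa using hc⟩
    rw [this]

lemma aF_assoc {n : ℕ} {t : (i : Fin n) → Fin ((i : ℕ) + 1) → ℕ}
    (ht : IsMonotoneTriangle t) : AssocTriangle (aF t) t := by
  refine ⟨ht.1, ?_⟩
  intro i c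
  have hpc : ∑ l ∈ Finset.Iic i, aF t l c = bbF t (i : ℕ) c := by
    have := aF_partial_col t (i : ℕ) i.2 c
    rwa [Fin.eta] at this
  rw [hpc, bbF_eq_one_iff t i.2 c, Finset.mem_image]
  constructor
  · rintro ⟨j, -, hj⟩
    exact ⟨j, hj⟩
  · rintro ⟨j, hj⟩
    exact ⟨j, Finset.mem_univ _, hj⟩

lemma aF_unique {n : ℕ} {t : (i : Fin n) → Fin ((i : ℕ) + 1) → ℕ}
    (ht : IsMonotoneTriangle t) {a : Matrix (Fin n) (Fin n) ℤ}
    (ha : IsASM a) (hat : AssocTriangle a t) : a = aF t := by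
  have hbb : ∀ (i : Fin n) (c : Fin n),
      ∑ l ∈ Finset.Iic i, a l c = bbF t (i : ℕ) c := by
    intro i c
    have h01 := ha.2.2.2.1 c i
    have hiff : (∑ l ∈ Finset.Iic i, a l c) = 1 ↔ bbF t (i : ℕ) c = 1 := by
      rw [hat.2 i c, bbF_eq_one_iff t i.2 c, Finset.mem_image]
      constructor
      · rintro ⟨j, hj⟩
        exact ⟨j, Finset.mem_univ _, hj⟩
      · rintro ⟨j, -, hj⟩
        exact ⟨j, hj⟩
    rcases h01 with h1 | h1
    · have hne : bbF t (i : ℕ) c ≠ 1 := by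
        intro hb
        rw [hiff.mpr hb] at h1
        norm_num at h1
      rcases bbF01 t (i : ℕ) c with h2 | h2
      · rw [h1, h2]
      · exact absurd h2 hne
    · rw [h1, hiff.mp h1]
  funext i c
  rcases i with ⟨i0, hi0⟩
  match i0 with
  | 0 =>
    have hIic : Finset.Iic (⟨0, hi0⟩ : Fin n) = {⟨0, hi0⟩} := fin_Iic_zero hi0
    have hb := hbb ⟨0, hi0⟩ c
    rw [hIic, Finset.sum_singleton] at hb
    simp only [aF, Fin.val_mk, if_pos rfl, if_true]
    rw [hb]
    simp
  | i0 + 1 =>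
    have h1 := hbb ⟨i0 + 1, hi0⟩ c
    rw [fin_Iic_succ i0 hi0, Finset.sum_insert (fin_not_mem_Iic i0 hi0)] at h1
    have h2 := hbb ⟨i0, Nat.lt_of_succ_lt hi0⟩ c
    simp only [Fin.val_mk] at h1 h2
    rw [h2] at h1
    simp only [aF, Fin.val_mk, if_neg (show ¬ (i0 + 1 = 0) by omega), Nat.add_sub_cancel]
    omega

theorem asm_monotone_triangle_bijection (n : ℕ) :
    (∀ a : Matrix (Fin n) (Fin n) ℤ, IsASM a →
      ∃! t : (i : Fin n) → Fin ((i : ℕ) + 1) → ℕ, AssocTriangle a t) ∧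
    (∀ a : Matrix (Fin n) (Fin n) ℤ, IsASM a →
      ∀ t : (i : Fin n) → Fin ((i : ℕ) + 1) → ℕ, AssocTriangle a t →
        IsMonotoneTriangle t) ∧
    (∀ t : (i : Fin n) → Fin ((i : ℕ) + 1) → ℕ, IsMonotoneTriangle t →
      ∃! a : Matrix (Fin n) (Fin n) ℤ, IsASM a ∧ AssocTriangle a t) := by
  refine ⟨?_, ?_, ?_⟩
  · intro a ha
    exact assoc_unique ha
  · intro a ha t hat
    exact assoc_monotone ha hat
  · intro t ht
    exact ⟨aF t, ⟨aF_isASM ht, aF_assoc ht⟩, fun a ha => aF_unique ht ha.1 ha.2⟩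
end
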